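/- arXiv:gr-qc/0702101 — 6 statements merged into one kernel-verified Lean document; each statement's English description precedes it below -/
import Mathlib

section
/- Let f : [V, v] → ℝ be integrable with ∫_V^v f ≤ ε and ∫_V^v |f| ≤ M, and let r : [V, v] → ℝ satisfy r₊ − δ₁ ≤ r ≤ r₊ with 0 < δ₁ ≤ r₊. Then ∫_V^v 2r(ṽ)³ f(ṽ) dṽ ≤ 2r₊³ε + 6r₊²δ₁M. -/
/-- If `∫ f ≤ ε`, `∫ |f| ≤ M`, and `r₊ − δ₁ ≤ r ≤ r₊` with `0 < δ₁ ≤ r₊`, then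
`∫ 2r³f ≤ 2r₊³ε + 6r₊²δ₁M`. -/
theorem stmt7 (V v rplus δ₁ ε M : ℝ) (hVv : V ≤ v) (hδ₁ : 0 < δ₁) (hδr : δ₁ ≤ rplus)
    (f r : ℝ → ℝ)
    (hfint : IntervalIntegrable f MeasureTheory.volume V v)
    (hrfint : IntervalIntegrable (fun x => 2 * r x ^ 3 * f x) MeasureTheory.volume V v)
    (habsint : IntervalIntegrable (fun x => |f x|) MeasureTheory.volume V v)
    (hintf : (∫ x in V..v, f x) ≤ ε)
    (hintabs : (∫ x in V..v, |f x|) ≤ M)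
    (hrlow : ∀ x ∈ Set.Icc V v, rplus - δ₁ ≤ r x)
    (hrhigh : ∀ x ∈ Set.Icc V v, r x ≤ rplus) :
    (∫ x in V..v, 2 * r x ^ 3 * f x) ≤ 2 * rplus ^ 3 * ε + 6 * rplus ^ 2 * δ₁ * M := by
  have hmaj : IntervalIntegrable (fun x => 2 * rplus ^ 3 * f x + 6 * rplus ^ 2 * δ₁ * |f x|)
      MeasureTheory.volume V v := by
    exact (hfint.const_mul _).add (habsint.const_mul _)
  have hstep : (∫ x in V..v, 2 * r x ^ 3 * f x)
      ≤ ∫ x in V..v, (2 * rplus ^ 3 * f x + 6 * rplus ^ 2 * δ₁ * |f x|) := by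
    apply intervalIntegral.integral_mono_on hVv hrfint hmaj
    intro x hx
    have h1 := hrlow x hx
    have h2 := hrhigh x hx
    have h0 : 0 ≤ r x := by linarith
    have hk : rplus ^ 3 - r x ^ 3 ≤ 3 * rplus ^ 2 * δ₁ := by
      nlinarith [mul_le_mul (by linarith : rplus - r x ≤ δ₁)
        (by nlinarith : rplus ^ 2 + rplus * r x + r x ^ 2 ≤ 3 * rplus ^ 2)
        (by nlinarith) hδ₁.le]
    rcases le_or_gt 0 (f x) with hf | hf
    · rw [abs_of_nonneg hf]
      have h3 : r x ^ 3 ≤ rplus ^ 3 := pow_le_pow_left₀ h0 h2 3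
      nlinarith [mul_le_mul_of_nonneg_right h3 hf, mul_nonneg (mul_nonneg (by positivity : (0:ℝ) ≤ 6 * rplus ^ 2) hδ₁.le) hf]
    · rw [abs_of_neg hf]
      nlinarith [mul_le_mul_of_nonneg_right hk (neg_pos.2 hf).le]
  have hsplit : (∫ x in V..v, (2 * rplus ^ 3 * f x + 6 * rplus ^ 2 * δ₁ * |f x|))
      = 2 * rplus ^ 3 * (∫ x in V..v, f x) + 6 * rplus ^ 2 * δ₁ * (∫ x in V..v, |f x|) := by
    rw [intervalIntegral.integral_add (hfint.const_mul _) (habsint.const_mul _),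
      intervalIntegral.integral_const_mul, intervalIntegral.integral_const_mul]
  have hrp : (0:ℝ) ≤ rplus := le_trans hδ₁.le hδr
  have hc1 : (0:ℝ) ≤ 2 * rplus ^ 3 := by nlinarith [pow_nonneg hrp 3]
  have hc2 : (0:ℝ) ≤ 6 * rplus ^ 2 * δ₁ := by positivity
  calc (∫ x in V..v, 2 * r x ^ 3 * f x) ≤ _ := hstep
    _ = _ := hsplit
    _ ≤ 2 * rplus ^ 3 * ε + 6 * rplus ^ 2 * δ₁ * M := by
        gcongr <;> assumption
end

section
/- Let γ(v) = (u(v), v) parameterize a curve in a 1+1 Lorentzian manifold with metric −Ω²du dv, along which du/dv = −2r³T_{vv}/(Ω²α) with r ≤ r₊, α ≥ α₀ > 0, and T_{vv}(γ(v)) ≤ c₃ v^{−2−ε} for constants c₃ ≥ 0, ε > 0. Then the length ∫_V^∞ |γ'(v)| dv = ∫_V^∞ √(2r³T_{vv}/α) dv is finite, bounded by ∫_V^∞ √(2r₊³/α₀) √(c₃) v^{−1−ε/2} dv < ∞. -/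
/-- Along a curve `γ(v) = (u(v), v)` with `|γ'(v)|² = 2r³T_{vv}/α`, if `r ≤ r₊`,
`α ≥ α₀ > 0`, and `T_{vv}(v) ≤ c₃ v^{−2−ε}`, then the length
`∫_V^∞ √(2r³T_{vv}/α) dv` is finite. -/
theorem stmt9 (V rplus α₀ c₃ ε : ℝ) (hV : 0 < V) (hα₀ : 0 < α₀) (hc₃ : 0 ≤ c₃)
    (hε : 0 < ε) (r α Tvv : ℝ → ℝ)
    (hr0 : ∀ v ∈ Set.Ici V, 0 ≤ r v)
    (hrhigh : ∀ v ∈ Set.Ici V, r v ≤ rplus)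
    (hαlow : ∀ v ∈ Set.Ici V, α₀ ≤ α v)
    (hT0 : ∀ v ∈ Set.Ici V, 0 ≤ Tvv v)
    (hTdecay : ∀ v ∈ Set.Ici V, Tvv v ≤ c₃ * v ^ (-2 - ε : ℝ))
    (hcont : ContinuousOn (fun v => Real.sqrt (2 * r v ^ 3 * Tvv v / α v)) (Set.Ici V)) :
    MeasureTheory.IntegrableOn
      (fun v => Real.sqrt (2 * r v ^ 3 * Tvv v / α v)) (Set.Ici V)
      MeasureTheory.volume := by
  -- dominate by C * v ^ (-1 - ε/2)
  have hmaj : MeasureTheory.IntegrableOn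
      (fun v => Real.sqrt (2 * rplus ^ 3 * c₃ / α₀) * v ^ (-1 - ε / 2 : ℝ))
      (Set.Ici V) MeasureTheory.volume := by
    rw [integrableOn_Ici_iff_integrableOn_Ioi]
    exact (integrableOn_Ioi_rpow_of_lt (by linarith) hV).const_mul _
  refine MeasureTheory.Integrable.mono' hmaj
    (hcont.aestronglyMeasurable measurableSet_Ici) ?_
  filter_upwards [MeasureTheory.ae_restrict_mem measurableSet_Ici] with v hv
  have hv0 : 0 < v := lt_of_lt_of_le hV hv
  have hαv : 0 < α v := lt_of_lt_of_le hα₀ (hαlow v hv)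
  rw [Real.norm_eq_abs, abs_of_nonneg (Real.sqrt_nonneg _)]
  have hrp : 0 ≤ rplus := le_trans (hr0 v hv) (hrhigh v hv)
  have key : 2 * r v ^ 3 * Tvv v / α v
      ≤ 2 * rplus ^ 3 * c₃ / α₀ * (v ^ (-1 - ε / 2 : ℝ)) ^ 2 := by
    have hvp : (v ^ (-1 - ε / 2 : ℝ)) ^ 2 = v ^ (-2 - ε : ℝ) := by
      rw [← Real.rpow_natCast (v ^ (-1 - ε / 2 : ℝ)) 2, ← Real.rpow_mul hv0.le]
      norm_num
      congr 1
      ring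
    rw [hvp]
    have h1 : 2 * r v ^ 3 * Tvv v ≤ 2 * rplus ^ 3 * (c₃ * v ^ (-2 - ε : ℝ)) := by
      have : r v ^ 3 ≤ rplus ^ 3 := pow_le_pow_left₀ (hr0 v hv) (hrhigh v hv) 3
      have hT := hTdecay v hv
      nlinarith [hT0 v hv, hr0 v hv, pow_nonneg (hr0 v hv) 3]
    calc 2 * r v ^ 3 * Tvv v / α v ≤ 2 * rplus ^ 3 * (c₃ * v ^ (-2 - ε : ℝ)) / α v := by
          gcongr
      _ ≤ 2 * rplus ^ 3 * (c₃ * v ^ (-2 - ε : ℝ)) / α₀ := by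
          apply div_le_div_of_nonneg_left _ hα₀ (hαlow v hv)
          positivity
      _ = 2 * rplus ^ 3 * c₃ / α₀ * v ^ (-2 - ε : ℝ) := by ring
  calc Real.sqrt (2 * r v ^ 3 * Tvv v / α v)
      ≤ Real.sqrt (2 * rplus ^ 3 * c₃ / α₀ * (v ^ (-1 - ε / 2 : ℝ)) ^ 2) :=
        Real.sqrt_le_sqrt key
    _ = Real.sqrt (2 * rplus ^ 3 * c₃ / α₀) * v ^ (-1 - ε / 2 : ℝ) := by
        rw [Real.sqrt_mul (by positivity), Real.sqrt_sq (by positivity)]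
end

section
/- For constants a₀ > 0, p > 0, and v₁ ≥ e with (p/a₀)(log v)/v < 1 for all v ≥ v₁, one has for all v ≥ v₁: e^{−a₀v}∫_{v₁}^v ṽ^{−p−1}e^{a₀ṽ}dṽ ≤ p^{-1}v^{−p}[(1 − (p/a₀)v^{-1}log v)^{−p} − 1 + v₁^{−p}]. -/
open Real intervalIntegral MeasureTheory

lemma aux_integrable (p a₀ a b : ℝ) (ha : 0 < a) (hab : a ≤ b) :
    IntervalIntegrable (fun t => t ^ (-p - 1 : ℝ) * Real.exp (a₀ * t)) volume a b := by
  apply ContinuousOn.intervalIntegrable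
  apply ContinuousOn.mul
  · apply ContinuousOn.rpow_const continuousOn_id
    intro x hx
    rw [Set.uIcc_of_le hab] at hx
    exact Or.inl (ne_of_gt (lt_of_lt_of_le ha hx.1))
  · exact (Real.continuous_exp.comp (continuous_const.mul continuous_id)).continuousOn

lemma aux_bound (p a₀ C a b : ℝ) (hp : 0 < p) (ha : 0 < a) (hab : a ≤ b)
    (hC : ∀ t ∈ Set.Icc a b, Real.exp (a₀ * t) ≤ Real.exp C) :
    ∫ t in a..b, t ^ (-p - 1 : ℝ) * Real.exp (a₀ * t) ≤
      Real.exp C * ((a ^ (-p : ℝ) - b ^ (-p : ℝ)) / p) := by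
  have key : ∫ t in a..b, t ^ (-p - 1 : ℝ) * Real.exp (a₀ * t) ≤
      ∫ t in a..b, t ^ (-p - 1 : ℝ) * Real.exp C := by
    apply intervalIntegral.integral_mono_on hab (aux_integrable p a₀ a b ha hab)
    · apply ContinuousOn.intervalIntegrable
      apply ContinuousOn.mul _ continuousOn_const
      apply ContinuousOn.rpow_const continuousOn_id
      intro x hx
      rw [Set.uIcc_of_le hab] at hx
      exact Or.inl (ne_of_gt (lt_of_lt_of_le ha hx.1))
    · intro t ht
      have h0 : (0:ℝ) ≤ t ^ (-p - 1 : ℝ) :=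
        Real.rpow_nonneg (le_of_lt (lt_of_lt_of_le ha ht.1)) _
      exact mul_le_mul_of_nonneg_left (hC t ht) h0
  have hval : ∫ t in a..b, t ^ (-p - 1 : ℝ) * Real.exp C =
      Real.exp C * ((a ^ (-p : ℝ) - b ^ (-p : ℝ)) / p) := by
    rw [intervalIntegral.integral_mul_const, integral_rpow]
    · have h' : (-p - 1 : ℝ) + 1 = -p := by ring
      rw [h']
      ring
    · right
      refine ⟨by intro h; nlinarith, ?_⟩
      rw [Set.uIcc_of_le hab]
      intro h
      exact absurd h.1 (not_le.mpr ha)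
  linarith

/-- For `a₀ > 0`, `p > 0`, `v₁ ≥ e` with `(p/a₀)(log v)/v < 1` for all `v ≥ v₁`,
one has `e^{−a₀v}∫_{v₁}^v ṽ^{−p−1}e^{a₀ṽ}dṽ
 ≤ p⁻¹ v^{−p}[(1 − (p/a₀)v⁻¹ log v)^{−p} − 1 + v₁^{−p}]`. -/
theorem stmt12 (a₀ p v₁ : ℝ) (ha₀ : 0 < a₀) (hp : 0 < p)
    (hv₁ : Real.exp 1 ≤ v₁)
    (hsmall : ∀ v ∈ Set.Ici v₁, p / a₀ * Real.log v / v < 1) :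
    ∀ v ∈ Set.Ici v₁,
      Real.exp (-a₀ * v) * ∫ t in v₁..v, t ^ (-p - 1 : ℝ) * Real.exp (a₀ * t) ≤
      p⁻¹ * v ^ (-p : ℝ) *
        ((1 - p / a₀ * v⁻¹ * Real.log v) ^ (-p : ℝ) - 1 + v₁ ^ (-p : ℝ)) := by
  intro v hv
  have hv₁0 : 0 < v₁ := lt_of_lt_of_le (Real.exp_pos 1) hv₁
  have hv0 : 0 < v := lt_of_lt_of_le hv₁0 hv
  have hlog : 1 ≤ Real.log v := by
    rw [← Real.log_exp 1]
    exact Real.log_le_log (Real.exp_pos 1) (le_trans hv₁ hv)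
  set L := Real.log v with hL
  set c : ℝ := v - p / a₀ * L with hc
  have hx : p / a₀ * L / v < 1 := hsmall v hv
  have hxv : p / a₀ * v⁻¹ * L = p / a₀ * L / v := by ring
  have hcv : c = v * (1 - p / a₀ * v⁻¹ * L) := by
    field_simp [hc]
    rw [hc]; field_simp
  have h1x : 0 < 1 - p / a₀ * v⁻¹ * L := by
    rw [hxv]; linarith
  have hc0 : 0 < c := by rw [hcv]; positivity
  have hclt : c < v := by
    have h : 0 < p / a₀ * L := by positivity
    rw [hc]; linarith
  have hcpow : c ^ (-p : ℝ) = v ^ (-p : ℝ) * (1 - p / a₀ * v⁻¹ * L) ^ (-p : ℝ) := by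
    rw [hcv, Real.mul_rpow hv0.le h1x.le]
  have hexp : Real.exp (-a₀ * v) * Real.exp (a₀ * c) = v ^ (-p : ℝ) := by
    rw [← Real.exp_add, Real.rpow_def_of_pos hv0]
    congr 1
    rw [hc]
    field_simp
    ring
  have hE : (0:ℝ) < Real.exp (-a₀ * v) := Real.exp_pos _
  have hEv : Real.exp (-a₀ * v) * Real.exp (a₀ * v) = 1 := by
    rw [← Real.exp_add]; ring_nf; exact Real.exp_zero
  have hRHS : p⁻¹ * v ^ (-p : ℝ) * ((1 - p / a₀ * v⁻¹ * L) ^ (-p : ℝ) - 1 + v₁ ^ (-p : ℝ))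
      = (c ^ (-p : ℝ) - v ^ (-p : ℝ)) / p + v ^ (-p : ℝ) * v₁ ^ (-p : ℝ) / p := by
    rw [hcpow]; field_simp
  rw [hRHS]
  have hnn : (0:ℝ) ≤ v ^ (-p : ℝ) * v₁ ^ (-p : ℝ) / p := by positivity
  rcases le_total c v₁ with hcase | hcase
  · -- c ≤ v₁ : bound whole integral at once
    have hbd := aux_bound p a₀ (a₀ * v) v₁ v hp hv₁0 hv
      (fun t ht => Real.exp_le_exp.mpr (mul_le_mul_of_nonneg_left ht.2 ha₀.le))
    have hmono : v₁ ^ (-p : ℝ) ≤ c ^ (-p : ℝ) :=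
      Real.rpow_le_rpow_of_nonpos hc0 hcase (neg_nonpos.mpr hp.le)
    have hstep : Real.exp (-a₀ * v) * ∫ t in v₁..v, t ^ (-p - 1 : ℝ) * Real.exp (a₀ * t) ≤
        (v₁ ^ (-p : ℝ) - v ^ (-p : ℝ)) / p := by
      calc Real.exp (-a₀ * v) * ∫ t in v₁..v, t ^ (-p - 1 : ℝ) * Real.exp (a₀ * t)
          ≤ Real.exp (-a₀ * v) * (Real.exp (a₀ * v) * ((v₁ ^ (-p : ℝ) - v ^ (-p : ℝ)) / p)) :=
            mul_le_mul_of_nonneg_left hbd hE.le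
        _ = (v₁ ^ (-p : ℝ) - v ^ (-p : ℝ)) / p := by rw [← mul_assoc, hEv, one_mul]
    have h2 : (v₁ ^ (-p : ℝ) - v ^ (-p : ℝ)) / p ≤ (c ^ (-p : ℝ) - v ^ (-p : ℝ)) / p := by
      gcongr
    linarith
  · -- v₁ ≤ c : split the integral at c
    have hi1 := aux_integrable p a₀ v₁ c hv₁0 hcase
    have hi2 := aux_integrable p a₀ c v hc0 hclt.le
    have hsplit := intervalIntegral.integral_add_adjacent_intervals hi1 hi2
    rw [← hsplit, mul_add]
    have hb1 : Real.exp (-a₀ * v) * ∫ t in v₁..c, t ^ (-p - 1 : ℝ) * Real.exp (a₀ * t) ≤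
        v ^ (-p : ℝ) * ((v₁ ^ (-p : ℝ) - c ^ (-p : ℝ)) / p) := by
      have hbd := aux_bound p a₀ (a₀ * c) v₁ c hp hv₁0 hcase
        (fun t ht => Real.exp_le_exp.mpr (mul_le_mul_of_nonneg_left ht.2 ha₀.le))
      calc Real.exp (-a₀ * v) * ∫ t in v₁..c, t ^ (-p - 1 : ℝ) * Real.exp (a₀ * t)
          ≤ Real.exp (-a₀ * v) * (Real.exp (a₀ * c) * ((v₁ ^ (-p : ℝ) - c ^ (-p : ℝ)) / p)) :=
            mul_le_mul_of_nonneg_left hbd hE.le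
        _ = v ^ (-p : ℝ) * ((v₁ ^ (-p : ℝ) - c ^ (-p : ℝ)) / p) := by rw [← mul_assoc, hexp]
    have hb2 : Real.exp (-a₀ * v) * ∫ t in c..v, t ^ (-p - 1 : ℝ) * Real.exp (a₀ * t) ≤
        (c ^ (-p : ℝ) - v ^ (-p : ℝ)) / p := by
      have hbd := aux_bound p a₀ (a₀ * v) c v hp hc0 hclt.le
        (fun t ht => Real.exp_le_exp.mpr (mul_le_mul_of_nonneg_left ht.2 ha₀.le))
      calc Real.exp (-a₀ * v) * ∫ t in c..v, t ^ (-p - 1 : ℝ) * Real.exp (a₀ * t)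
          ≤ Real.exp (-a₀ * v) * (Real.exp (a₀ * v) * ((c ^ (-p : ℝ) - v ^ (-p : ℝ)) / p)) :=
            mul_le_mul_of_nonneg_left hbd hE.le
        _ = (c ^ (-p : ℝ) - v ^ (-p : ℝ)) / p := by rw [← mul_assoc, hEv, one_mul]
    have hsplit2 : v ^ (-p : ℝ) * ((v₁ ^ (-p : ℝ) - c ^ (-p : ℝ)) / p)
        = v ^ (-p : ℝ) * v₁ ^ (-p : ℝ) / p - v ^ (-p : ℝ) * c ^ (-p : ℝ) / p := by ring
    have hnn2 : (0:ℝ) ≤ v ^ (-p : ℝ) * c ^ (-p : ℝ) / p := by positivity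
    linarith
end

section
/- Let φ : [0, u] → ℝ (at fixed v) satisfy ∂_u log|∂_vφ| ≤ −(c₄r₊/(4c₃) + 1)∂_u log r, with r₊ − δ ≤ r ≤ r₊, |∂_vφ(0)| < ε″/2, and δ < r₊(1 − 2^{−(c₄r₊/(4c₃)+1)^{-1}}). Then |∂_vφ(u)| < ε″. -/
/-- If `∂ᵤ log|∂ᵥφ| ≤ −(c₄r₊/(4c₃) + 1) ∂ᵤ log r` on `[0,u]` with
`r₊ − δ ≤ r ≤ r₊`, `|∂ᵥφ(0)| < ε″/2`, and `δ < r₊(1 − 2^{−(c₄r₊/(4c₃)+1)⁻¹})`,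
then `|∂ᵥφ(u)| < ε″`. -/
theorem stmt17 (u c₃ c₄ rplus δ ε'' : ℝ) (hu : 0 ≤ u) (hc₃ : 0 < c₃) (hc₄ : 0 < c₄)
    (hrp : 0 < rplus) (hδ0 : 0 < δ)
    (hδ : δ < rplus * (1 - (2:ℝ) ^ (-(c₄ * rplus / (4 * c₃) + 1)⁻¹ : ℝ)))
    (φv L r r' : ℝ → ℝ)
    (hφvne : ∀ t ∈ Set.Icc (0:ℝ) u, φv t ≠ 0)
    (hrpos : ∀ t ∈ Set.Icc (0:ℝ) u, 0 < r t)
    (hLd : ∀ t ∈ Set.Icc (0:ℝ) u, HasDerivAt (fun x => Real.log |φv x|) (L t) t)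
    (hrd : ∀ t ∈ Set.Icc (0:ℝ) u, HasDerivAt r (r' t) t)
    (hL : ∀ t ∈ Set.Icc (0:ℝ) u,
      L t ≤ -(c₄ * rplus / (4 * c₃) + 1) * (r' t / r t))
    (hrlow : ∀ t ∈ Set.Icc (0:ℝ) u, rplus - δ ≤ r t)
    (hrhigh : ∀ t ∈ Set.Icc (0:ℝ) u, r t ≤ rplus)
    (h0 : |φv 0| < ε'' / 2) :
    |φv u| < ε'' := by
  set k : ℝ := c₄ * rplus / (4 * c₃) + 1 with hk_def
  have hk : 0 < k := by positivity
  -- rplus - δ > 0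
  have hpow : (0:ℝ) < (2:ℝ) ^ (-k⁻¹ : ℝ) := Real.rpow_pos_of_pos (by norm_num) _
  have hδlt : δ < rplus := lt_of_lt_of_le hδ (by nlinarith)
  have hrδ : 0 < rplus - δ := by linarith
  -- key: rplus / (rplus - δ) < 2 ^ (k⁻¹)
  have hrate : rplus / (rplus - δ) < (2:ℝ) ^ (k⁻¹ : ℝ) := by
    have h1 : rplus * (2:ℝ) ^ (-k⁻¹ : ℝ) < rplus - δ := by nlinarith
    have h2 : rplus / (rplus - δ) < rplus / (rplus * (2:ℝ) ^ (-k⁻¹ : ℝ)) :=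
      div_lt_div_of_pos_left hrp (by positivity) h1
    calc rplus / (rplus - δ) < rplus / (rplus * (2:ℝ) ^ (-k⁻¹ : ℝ)) := h2
      _ = ((2:ℝ) ^ (-k⁻¹ : ℝ))⁻¹ := by field_simp
      _ = (2:ℝ) ^ (k⁻¹ : ℝ) := by
          rw [← Real.rpow_neg (by norm_num), neg_neg]
  -- the auxiliary function
  set f : ℝ → ℝ := fun t => Real.log |φv t| + k * Real.log (r t) with hf_def
  have hmem0 : (0:ℝ) ∈ Set.Icc (0:ℝ) u := ⟨le_refl _, hu⟩
  have hmemu : u ∈ Set.Icc (0:ℝ) u := ⟨hu, le_refl _⟩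
  have hfd : ∀ t ∈ Set.Icc (0:ℝ) u, HasDerivAt f (L t + k * (r' t / r t)) t := by
    intro t ht
    exact (hLd t ht).add (((hrd t ht).log (ne_of_gt (hrpos t ht))).const_mul k)
  have hfle : f u ≤ f 0 := by
    have hanti : AntitoneOn f (Set.Icc (0:ℝ) u) := by
      apply antitoneOn_of_deriv_nonpos (convex_Icc 0 u)
      · intro t ht
        exact (hfd t ht).continuousAt.continuousWithinAt
      · intro t ht
        have ht' : t ∈ Set.Icc (0:ℝ) u := interior_subset ht
        exact ((hfd t ht').differentiableAt).differentiableWithinAt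
      · intro t ht
        have ht' : t ∈ Set.Icc (0:ℝ) u := interior_subset ht
        rw [(hfd t ht').deriv]
        have := hL t ht'
        linarith
    exact hanti hmem0 hmemu hu
  -- unfold
  have hru : 0 < r u := hrpos u hmemu
  have hr0 : 0 < r 0 := hrpos 0 hmem0
  have hlog1 : Real.log |φv u| ≤ Real.log |φv 0| + k * (Real.log (r 0) - Real.log (r u)) := by
    simp only [hf_def] at hfle; linarith [hfle]
  have hlogr0 : Real.log (r 0) ≤ Real.log rplus := Real.log_le_log hr0 (hrhigh 0 hmem0)
  have hlogru : Real.log (rplus - δ) ≤ Real.log (r u) := Real.log_le_log hrδ (hrlow u hmemu)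
  have hlog2 : Real.log |φv u| ≤ Real.log |φv 0| + k * (Real.log rplus - Real.log (rplus - δ)) := by
    nlinarith [hk]
  have hratio : Real.log rplus - Real.log (rplus - δ) = Real.log (rplus / (rplus - δ)) :=
    (Real.log_div (ne_of_gt hrp) (ne_of_gt hrδ)).symm
  have hrate' : Real.log (rplus / (rplus - δ)) < k⁻¹ * Real.log 2 := by
    have := Real.log_lt_log (by positivity) hrate
    rwa [Real.log_rpow (by norm_num)] at this
  have hklog : k * (Real.log rplus - Real.log (rplus - δ)) < Real.log 2 := by
    rw [hratio]
    have := mul_lt_mul_of_pos_left hrate' hk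
    rwa [← mul_assoc, mul_inv_cancel₀ (ne_of_gt hk), one_mul] at this
  have hfinal : Real.log |φv u| < Real.log (2 * |φv 0|) := by
    rw [Real.log_mul (by norm_num) (abs_ne_zero.mpr (hφvne 0 hmem0))]
    linarith
  have habsu : 0 < |φv u| := abs_pos.mpr (hφvne u hmemu)
  have habs0 : 0 < |φv 0| := abs_pos.mpr (hφvne 0 hmem0)
  have h2 : |φv u| < 2 * |φv 0| := by
    have := Real.exp_lt_exp.mpr hfinal
    rwa [Real.exp_log habsu, Real.exp_log (by linarith)] at this
  linarith
end

section
/- If ∂²_{uv} r = (1/4)Ω²r^{-1}[2r²V(φ) + (1 − 2m/r) − 1] with Ω² = −4κ(∂_u r), κ ≥ 1/(4c₂), ∂_u r < 0, r ≤ r₊, V(φ) ≤ ε', and 1 − 2m/r ≤ 4c₂ε, and if 1 − 2r₊²ε' − 4c₂ε > 0, then ∂²_{uv} r ≤ a₂(∂_u r) < 0 where a₂ = (1 − 2r₊²ε' − 4c₂ε)/(4c₂r₊). -/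
/-- If `∂²ᵤᵥr = (1/4)Ω²r⁻¹[2r²V(φ) + (1 − 2m/r) − 1]` with `Ω² = −4κ∂ᵤr`,
`κ ≥ 1/(4c₂)`, `∂ᵤr < 0`, `0 < r ≤ r₊`, `0 ≤ V(φ) ≤ ε'`, `1 − 2m/r ≤ 4c₂ε`, and
`1 − 2r₊²ε' − 4c₂ε > 0`, then `∂²ᵤᵥr ≤ a₂ ∂ᵤr < 0` with
`a₂ = (1 − 2r₊²ε' − 4c₂ε)/(4c₂r₊)`. -/
theorem stmt18 (ruv Ω κ ru r rplus m Vφ c₂ ε ε' : ℝ)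
    (hc₂ : 0 < c₂) (hru : ru < 0) (hr : 0 < r) (hrp : r ≤ rplus)
    (hΩ : Ω ^ 2 = -4 * κ * ru) (hκ : 1 / (4 * c₂) ≤ κ)
    (hV0 : 0 ≤ Vφ) (hV : Vφ ≤ ε') (hX : 1 - 2 * m / r ≤ 4 * c₂ * ε)
    (hpos : 0 < 1 - 2 * rplus ^ 2 * ε' - 4 * c₂ * ε)
    (hruv : ruv = 1 / 4 * Ω ^ 2 * r⁻¹ * (2 * r ^ 2 * Vφ + (1 - 2 * m / r) - 1)) :
    ruv ≤ (1 - 2 * rplus ^ 2 * ε' - 4 * c₂ * ε) / (4 * c₂ * rplus) * ru ∧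
    (1 - 2 * rplus ^ 2 * ε' - 4 * c₂ * ε) / (4 * c₂ * rplus) * ru < 0 := by
  have hrp0 : 0 < rplus := lt_of_lt_of_le hr hrp
  have hκ0 : 0 < κ := lt_of_lt_of_le (by positivity) hκ
  have hnru : 0 < -ru := by linarith
  set P := 1 - 2 * rplus ^ 2 * ε' - 4 * c₂ * ε with hP
  have hε' : 0 ≤ ε' := le_trans hV0 hV
  have hB : 2 * r ^ 2 * Vφ + (1 - 2 * m / r) - 1 ≤ -P := by
    have h1 : r ^ 2 * Vφ ≤ rplus ^ 2 * ε' :=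
      mul_le_mul (pow_le_pow_left₀ hr.le hrp 2) hV hV0 (by positivity)
    simp only [hP]; linarith
  constructor
  · rw [hruv, hΩ]
    have h2 : 1 / 4 * (-4 * κ * ru) * r⁻¹ * (2 * r ^ 2 * Vφ + (1 - 2 * m / r) - 1)
        ≤ 1 / 4 * (-4 * κ * ru) * r⁻¹ * (-P) := by
      have hfac : 0 ≤ 1 / 4 * (-4 * κ * ru) * r⁻¹ := by
        have heq : 1 / 4 * (-4 * κ * ru) * r⁻¹ = κ * (-ru) * r⁻¹ := by ring
        rw [heq]; positivity
      exact mul_le_mul_of_nonneg_left hB hfac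
    refine h2.trans ?_
    have hinv : rplus⁻¹ ≤ r⁻¹ := by
      apply inv_anti₀ hr hrp
    have key : P * (-ru) * ((1 / (4 * c₂)) * rplus⁻¹) ≤ P * (-ru) * (κ * r⁻¹) := by
      apply mul_le_mul_of_nonneg_left _ (by positivity)
      exact mul_le_mul hκ hinv (by positivity) hκ0.le
    have e1 : 1 / 4 * (-4 * κ * ru) * r⁻¹ * (-P) = -(P * (-ru) * (κ * r⁻¹)) := by ring
    have e2 : P / (4 * c₂ * rplus) * ru = -(P * (-ru) * ((1 / (4 * c₂)) * rplus⁻¹)) := by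
      field_simp
    rw [e1, e2]
    linarith
  · apply mul_neg_of_pos_of_neg _ hru
    positivity
end

section
/- Suppose ∂_u(V(φ)) ≤ 4c₃r₊^{-1}|∂_vφ||∂_uφ| pointwise in u ∈ [0,u], with |∂_vφ| ≤ ε″, |∂_uφ| ≤ √c₁|∂_u r|, ∂_u r < 0, r(0) − r(u) ≤ δ, V(φ(0)) < ε'/2, and 4√c₁c₃r₊^{-1}ε″δ < ε'/2. Then V(φ(u)) < ε'. -/
/-- If `∂ᵤ(V(φ)) ≤ 4c₃r₊⁻¹|∂ᵥφ||∂ᵤφ|` on `[0,u]` with `|∂ᵥφ| ≤ ε″`,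
`|∂ᵤφ| ≤ √c₁|∂ᵤr|`, `∂ᵤr < 0`, `r 0 − r u ≤ δ`, `V(φ(0)) < ε'/2`, and
`4√c₁ c₃ r₊⁻¹ ε″ δ < ε'/2`, then `V(φ(u)) < ε'`. -/
theorem stmt19 (u c₁ c₃ rplus δ ε' ε'' : ℝ) (hu : 0 ≤ u) (hc₁ : 0 < c₁)
    (hc₃ : 0 < c₃) (hrp : 0 < rplus) (hδ : 0 ≤ δ) (hε'' : 0 ≤ ε'')
    (hsmall : 4 * Real.sqrt c₁ * c₃ * rplus⁻¹ * ε'' * δ < ε' / 2)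
    (W W' φu φv r r' : ℝ → ℝ)
    (hWd : ∀ t ∈ Set.Icc (0:ℝ) u, HasDerivAt W (W' t) t)
    (hrd : ∀ t ∈ Set.Icc (0:ℝ) u, HasDerivAt r (r' t) t)
    (hW' : ∀ t ∈ Set.Icc (0:ℝ) u, W' t ≤ 4 * c₃ * rplus⁻¹ * |φv t| * |φu t|)
    (hφv : ∀ t ∈ Set.Icc (0:ℝ) u, |φv t| ≤ ε'')
    (hφu : ∀ t ∈ Set.Icc (0:ℝ) u, |φu t| ≤ Real.sqrt c₁ * |r' t|)
    (hr' : ∀ t ∈ Set.Icc (0:ℝ) u, r' t < 0)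
    (hrδ : r 0 - r u ≤ δ)
    (hW0 : W 0 < ε' / 2) :
    W u < ε' := by
  set K : ℝ := 4 * Real.sqrt c₁ * c₃ * rplus⁻¹ * ε'' with hK
  have hKnn : 0 ≤ K := by
    have := Real.sqrt_nonneg c₁
    positivity
  set g : ℝ → ℝ := fun t => W t + K * r t with hg
  have hgd : ∀ t ∈ Set.Icc (0:ℝ) u, HasDerivAt g (W' t + K * r' t) t := fun t ht =>
    (hWd t ht).add ((hrd t ht).const_mul K)
  have hderiv_nonpos : ∀ t ∈ Set.Icc (0:ℝ) u, W' t + K * r' t ≤ 0 := by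
    intro t ht
    have h1 : W' t ≤ 4 * c₃ * rplus⁻¹ * |φv t| * |φu t| := hW' t ht
    have h2 : 4 * c₃ * rplus⁻¹ * |φv t| * |φu t| ≤
        4 * c₃ * rplus⁻¹ * ε'' * (Real.sqrt c₁ * |r' t|) := by
      have hpos : 0 ≤ 4 * c₃ * rplus⁻¹ := by positivity
      calc 4 * c₃ * rplus⁻¹ * |φv t| * |φu t|
          ≤ 4 * c₃ * rplus⁻¹ * ε'' * |φu t| := by
            apply mul_le_mul_of_nonneg_right _ (abs_nonneg _)
            exact mul_le_mul_of_nonneg_left (hφv t ht) hpos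
        _ ≤ 4 * c₃ * rplus⁻¹ * ε'' * (Real.sqrt c₁ * |r' t|) := by
            apply mul_le_mul_of_nonneg_left (hφu t ht)
            positivity
    have habs : |r' t| = -(r' t) := abs_of_neg (hr' t ht)
    have : W' t ≤ K * (-(r' t)) := by
      calc W' t ≤ 4 * c₃ * rplus⁻¹ * ε'' * (Real.sqrt c₁ * |r' t|) := h1.trans h2
        _ = K * (-(r' t)) := by rw [habs, hK]; ring
    linarith
  have hanti : AntitoneOn g (Set.Icc (0:ℝ) u) := by
    apply antitoneOn_of_deriv_nonpos (convex_Icc 0 u)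
    · exact fun t ht => (hgd t ht).continuousAt.continuousWithinAt
    · intro t ht
      rw [interior_Icc] at ht
      exact (hgd t (Set.Ioo_subset_Icc_self ht)).differentiableAt.differentiableWithinAt
    · intro t ht
      rw [interior_Icc] at ht
      have ht' := Set.Ioo_subset_Icc_self ht
      rw [(hgd t ht').deriv]
      exact hderiv_nonpos t ht'
  have hgu : g u ≤ g 0 :=
    hanti (Set.left_mem_Icc.mpr hu) (Set.right_mem_Icc.mpr hu) hu
  have hWu : W u ≤ W 0 + K * (r 0 - r u) := by
    simp only [hg] at hgu; linarith
  have hKr : K * (r 0 - r u) ≤ K * δ := mul_le_mul_of_nonneg_left hrδ hKnn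
  have : K * δ < ε' / 2 := hsmall
  linarith
end
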